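/- Let ν be a function from subsets of ℝ to polynomials with real coefficients satisfying: (additivity) ν(A ∪ B) = ν(A) + ν(B) whenever A and B are disjoint; (translation invariance) ν({t + a : a ∈ A}) = ν(A) for every t ∈ ℝ and every A ⊆ ℝ; and (homogeneity) for every β ∈ ℝ and every A ⊆ ℝ, the polynomial ν({β·a : a ∈ A}) equals the polynomial x ↦ (ν(A))(β·x), i.e., ν(β·A) = ν(A) ∘ (β·X). Then there exists a real number α such that ν([0,1)) = α·X; that is, the coefficient of X^i in ν([0,1)) is zero for every i ≠ 1. -/

import Mathlib

open Polynomial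

lemma coeff_comp_C_mul_X (p : Polynomial ℝ) (b : ℝ) (n : ℕ) :
    (p.comp (C b * X)).coeff n = b ^ n * p.coeff n := by
  rw [comp, eval₂_eq_sum, Polynomial.sum_def, finset_sum_coeff]
  simp only [mul_pow, ← C_pow, ← mul_assoc, ← C_mul, coeff_C_mul, coeff_X_pow]
  rw [Finset.sum_eq_single n]
  · simp [mul_comm]
  · intro k _ hk; simp [Ne.symm hk]
  · intro h; simp [Polynomial.notMem_support_iff.mp h]

theorem scale_factor (ν : Set ℝ → Polynomial ℝ)
    (hadd : ∀ A B : Set ℝ, Disjoint A B → ν (A ∪ B) = ν A + ν B)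
    (htrans : ∀ (t : ℝ) (A : Set ℝ), ν ((fun a => t + a) '' A) = ν A)
    (hhomog : ∀ (β : ℝ) (A : Set ℝ),
      ν ((fun a => β * a) '' A) = (ν A).comp (C β * X)) :
    ∃ α : ℝ, ν (Set.Ico (0 : ℝ) 1) = C α * X := by
  set p := ν (Set.Ico (0 : ℝ) 1) with hp
  have h2 : ν (Set.Ico (1 : ℝ) 2) = p := by
    have := htrans 1 (Set.Ico 0 1)
    rwa [Set.image_const_add_Ico, add_zero, one_add_one_eq_two] at this
  have h3 : ν (Set.Ico (0 : ℝ) 2) = p.comp (C 2 * X) := by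
    have := hhomog 2 (Set.Ico 0 1)
    rwa [Set.image_mul_left_Ico (by norm_num : (0:ℝ) < 2), mul_zero, mul_one] at this
  have h1 : ν (Set.Ico (0 : ℝ) 2) = p + p := by
    rw [← Set.Ico_union_Ico_eq_Ico (by norm_num : (0:ℝ) ≤ 1) (by norm_num : (1:ℝ) ≤ 2),
      hadd _ _ (Set.Ico_disjoint_Ico_same), h2]
  have key : ∀ n : ℕ, n ≠ 1 → p.coeff n = 0 := by
    intro n hn
    have hc : (2:ℝ) ^ n * p.coeff n = 2 * p.coeff n := by
      have := h3.symm.trans h1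
      have := congrArg (fun q => Polynomial.coeff q n) this
      rw [mul_comm]
      simpa [coeff_comp_C_mul_X, two_mul] using this
    by_contra h
    have h2n : (2:ℝ) ^ n = 2 := by
      rw [mul_eq_mul_right_iff] at hc
      rcases hc with hc | hc
      · exact hc
      · exact absurd hc h
    match n, hn with
    | 0, _ => norm_num at h2n
    | (m+2), _ =>
      have h1 : (1:ℝ) ≤ 2 ^ m := one_le_pow₀ (by norm_num)
      rw [pow_add] at h2n
      nlinarith
  refine ⟨p.coeff 1, ?_⟩
  ext n
  rcases eq_or_ne n 1 with rfl | hn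
  · simp
  · simp [coeff_C_mul, coeff_X, Ne.symm hn, key n hn]
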